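/- Let k₁₋, k₁₊, k₂₋, k₂₊, ν be positive real numbers and let G₀, G₁, G₂ : ℝ → ℝ be three times differentiable functions satisfying, for all real z: (i) k₁₋G₁(z) − k₁₊G₀(z) + (1−z)G₀′(z) = 0; (ii) k₁₊G₀(z) − k₁₋G₁(z) − k₂₊G₁(z) + k₂₋G₂(z) + (1−z)G₁′(z) = 0; (iii) k₂₊G₁(z) − k₂₋G₂(z) + (1−z)G₂′(z) − ν(1−z)G₂(z) = 0. Then G₂ satisfies the third-order linear ODE (z−1)²G₂'''(z) + (z−1)(3+κ₁−ν(z−1))G₂''(z) + [κ₃ + (1+k₁₋+k₁₊)k₂₋ − ν(z−1)(3+κ₂)]G₂′(z) − νκ₃G₂(z) = 0 for all real z, where κ₁ = k₁₋+k₁₊+k₂₋+k₂₊, κ₂ = κ₁ − k₂₋, and κ₃ = k₁₋+(1+k₁₊)(1+k₂₊). -/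
import Mathlib

/-- If a function is identically zero, any derivative value it has is zero. -/
lemma deriv_of_zero_fun {F : ℝ → ℝ} (hF : ∀ x, F x = 0) {d z : ℝ}
    (h : HasDerivAt F d z) : d = 0 := by
  have hF' : F = fun _ => (0 : ℝ) := funext hF
  rw [hF'] at h
  simpa using h.unique (hasDerivAt_const z 0)

/-- If three times differentiable G₀, G₁, G₂ satisfy the steady-state
generating-function system of the three-state gene model, then G₂ satisfies the
third-order linear ODE
(z−1)²G₂''' + (z−1)(3+κ₁−ν(z−1))G₂'' + [κ₃+(1+k₁₋+k₁₊)k₂₋−ν(z−1)(3+κ₂)]G₂′ − νκ₃G₂ = 0. -/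
theorem G2_third_order_ODE
    (k₁m k₁p k₂m k₂p ν : ℝ) (hk₁m : 0 < k₁m) (hk₁p : 0 < k₁p)
    (hk₂m : 0 < k₂m) (hk₂p : 0 < k₂p) (hν : 0 < ν)
    (κ₁ κ₂ κ₃ : ℝ)
    (hκ₁ : κ₁ = k₁m + k₁p + k₂m + k₂p)
    (hκ₂ : κ₂ = κ₁ - k₂m)
    (hκ₃ : κ₃ = k₁m + (1 + k₁p) * (1 + k₂p))
    (G₀ G₁ G₂ : ℝ → ℝ)
    (hG₀ : Differentiable ℝ G₀) (hG₀' : Differentiable ℝ (deriv G₀))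
    (hG₀'' : Differentiable ℝ (deriv (deriv G₀)))
    (hG₁ : Differentiable ℝ G₁) (hG₁' : Differentiable ℝ (deriv G₁))
    (hG₁'' : Differentiable ℝ (deriv (deriv G₁)))
    (hG₂ : Differentiable ℝ G₂) (hG₂' : Differentiable ℝ (deriv G₂))
    (hG₂'' : Differentiable ℝ (deriv (deriv G₂)))
    (heq₀ : ∀ z : ℝ, k₁m * G₁ z - k₁p * G₀ z + (1 - z) * deriv G₀ z = 0)
    (heq₁ : ∀ z : ℝ, k₁p * G₀ z - k₁m * G₁ z - k₂p * G₁ z + k₂m * G₂ z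
      + (1 - z) * deriv G₁ z = 0)
    (heq₂ : ∀ z : ℝ, k₂p * G₁ z - k₂m * G₂ z + (1 - z) * deriv G₂ z
      - ν * (1 - z) * G₂ z = 0) :
    ∀ z : ℝ,
      (z - 1) ^ 2 * deriv (deriv (deriv G₂)) z
        + (z - 1) * (3 + κ₁ - ν * (z - 1)) * deriv (deriv G₂) z
        + (κ₃ + (1 + k₁m + k₁p) * k₂m - ν * (z - 1) * (3 + κ₂)) * deriv G₂ z
        - ν * κ₃ * G₂ z = 0 := by
  -- derivative of (1-z)
  have hw : ∀ z : ℝ, HasDerivAt (fun z : ℝ => 1 - z) (-1) z := by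
    intro z
    simpa using (hasDerivAt_id z).const_sub 1
  -- S : sum identity G₀' + G₁' + G₂' - ν G₂ = 0, by continuity at z = 1
  have hS : ∀ z : ℝ, deriv G₀ z + deriv G₁ z + deriv G₂ z - ν * G₂ z = 0 := by
    have hcont : Continuous (fun z => deriv G₀ z + deriv G₁ z + deriv G₂ z - ν * G₂ z) :=
      (((hG₀'.continuous.add hG₁'.continuous).add hG₂'.continuous).sub
        (continuous_const.mul hG₂.continuous))
    have hne : ∀ z : ℝ, z ≠ 1 →
        deriv G₀ z + deriv G₁ z + deriv G₂ z - ν * G₂ z = 0 := by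
      intro z hz
      have h := heq₀ z
      have h1 := heq₁ z
      have h2 := heq₂ z
      have hzz : (1 : ℝ) - z ≠ 0 := fun h' => hz (by linarith)
      have hsum : (1 - z) * (deriv G₀ z + deriv G₁ z + deriv G₂ z - ν * G₂ z) = 0 := by
        nlinarith [h, h1, h2]
      rcases mul_eq_zero.mp hsum with h' | h'
      · exact absurd h' hzz
      · exact h'
    intro z
    rcases eq_or_ne z 1 with rfl | hz
    · have hd : Dense ({(1:ℝ)}ᶜ) := dense_compl_singleton 1
      have := Continuous.ext_on hd hcont continuous_const (fun x hx => hne x hx)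
      exact congrFun this 1
    · exact hne z hz
  -- S' : derivative of S
  have hS' : ∀ z : ℝ, deriv (deriv G₀) z + deriv (deriv G₁) z + deriv (deriv G₂) z
      - ν * deriv G₂ z = 0 := by
    intro z
    exact deriv_of_zero_fun hS
      ((((hG₀' z).hasDerivAt.add (hG₁' z).hasDerivAt).add (hG₂' z).hasDerivAt).sub
        ((hG₂ z).hasDerivAt.const_mul ν))
  -- E0' : derivative of heq₀
  have h0' : ∀ z : ℝ, k₁m * deriv G₁ z - (k₁p + 1) * deriv G₀ z
      + (1 - z) * deriv (deriv G₀) z = 0 := by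
    intro z
    have hda : HasDerivAt (fun z => k₁m * G₁ z - k₁p * G₀ z + (1 - z) * deriv G₀ z)
        (k₁m * deriv G₁ z - k₁p * deriv G₀ z
          + (-1 * deriv G₀ z + (1 - z) * deriv (deriv G₀) z)) z :=
      (((hG₁ z).hasDerivAt.const_mul k₁m).sub ((hG₀ z).hasDerivAt.const_mul k₁p)).add
        ((hw z).mul (hG₀' z).hasDerivAt)
    have := deriv_of_zero_fun heq₀ hda
    linarith
  -- E2' : derivative of heq₂
  have h2' : ∀ z : ℝ, k₂p * deriv G₁ z - k₂m * deriv G₂ z - deriv G₂ z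
      + (1 - z) * deriv (deriv G₂) z + ν * G₂ z - ν * (1 - z) * deriv G₂ z = 0 := by
    intro z
    have hmul : HasDerivAt (fun z : ℝ => ν * ((1 - z) * G₂ z))
        (ν * (-1 * G₂ z + (1 - z) * deriv G₂ z)) z :=
      ((hw z).mul (hG₂ z).hasDerivAt).const_mul ν
    have hda : HasDerivAt (fun z => k₂p * G₁ z - k₂m * G₂ z + (1 - z) * deriv G₂ z
        - ν * ((1 - z) * G₂ z))
        (k₂p * deriv G₁ z - k₂m * deriv G₂ z
          + (-1 * deriv G₂ z + (1 - z) * deriv (deriv G₂) z)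
          - ν * (-1 * G₂ z + (1 - z) * deriv G₂ z)) z :=
      ((((hG₁ z).hasDerivAt.const_mul k₂p).sub
        ((hG₂ z).hasDerivAt.const_mul k₂m)).add
        ((hw z).mul (hG₂' z).hasDerivAt)).sub hmul
    have heq₂' : ∀ x : ℝ, k₂p * G₁ x - k₂m * G₂ x + (1 - x) * deriv G₂ x
        - ν * ((1 - x) * G₂ x) = 0 := by
      intro x; have := heq₂ x; nlinarith [this]
    have := deriv_of_zero_fun heq₂' hda
    nlinarith [this]
  -- E2'' : derivative of E2'
  have h2'' : ∀ z : ℝ, k₂p * deriv (deriv G₁) z - k₂m * deriv (deriv G₂) z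
      - 2 * deriv (deriv G₂) z + (1 - z) * deriv (deriv (deriv G₂)) z
      + 2 * ν * deriv G₂ z - ν * (1 - z) * deriv (deriv G₂) z = 0 := by
    intro z
    have hmul : HasDerivAt (fun z : ℝ => ν * ((1 - z) * deriv G₂ z))
        (ν * (-1 * deriv G₂ z + (1 - z) * deriv (deriv G₂) z)) z :=
      ((hw z).mul (hG₂' z).hasDerivAt).const_mul ν
    have hda : HasDerivAt (fun z => k₂p * deriv G₁ z - k₂m * deriv G₂ z - deriv G₂ z
        + (1 - z) * deriv (deriv G₂) z + ν * G₂ z - ν * ((1 - z) * deriv G₂ z))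
        ((k₂p * deriv (deriv G₁) z - k₂m * deriv (deriv G₂) z - deriv (deriv G₂) z
          + (-1 * deriv (deriv G₂) z + (1 - z) * deriv (deriv (deriv G₂)) z)
          + ν * deriv G₂ z
          - ν * (-1 * deriv G₂ z + (1 - z) * deriv (deriv G₂) z))) z :=
      ((((((hG₁' z).hasDerivAt.const_mul k₂p).sub
        ((hG₂' z).hasDerivAt.const_mul k₂m)).sub (hG₂' z).hasDerivAt).add
        ((hw z).mul (hG₂'' z).hasDerivAt)).add
        ((hG₂ z).hasDerivAt.const_mul ν)).sub hmul
    have h2'fun : ∀ x : ℝ, k₂p * deriv G₁ x - k₂m * deriv G₂ x - deriv G₂ x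
        + (1 - x) * deriv (deriv G₂) x + ν * G₂ x - ν * ((1 - x) * deriv G₂ x) = 0 := by
      intro x
      have := h2' x
      nlinarith [this]
    have := deriv_of_zero_fun h2'fun hda
    nlinarith [this]
  -- Final combination
  intro z
  subst hκ₁ hκ₂ hκ₃
  linear_combination k₂p * h0' z - (k₁m + k₁p + 1) * h2' z + (1 - z) * h2'' z
    + k₂p * (k₁p + 1) * hS z - k₂p * (1 - z) * hS' z
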